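/- In the negative-triangle gadget graph G: every edge incident to a vertex of B ∪ C has weight at least 2W; for all j, k ∈ {1,…,N} the edge {b_j, c_k} has weight at most 4W; and consequently every walk from b_j to c_k with at least two edges has total weight at least 4W, hence at least the weight of the edge {b_j, c_k}. -/

import Mathlib

/-- Vertex set of the negative-triangle gadget graph: `A ⊕ B ⊕ C ⊕ Ā`. -/
abbrev NTVert (P N : ℕ) := (Fin P ⊕ Fin N) ⊕ (Fin N ⊕ Fin P)

/-- Vertex `a_i` (0-indexed: `va P N i` is `a_{i+1}`). -/
def va (P N : ℕ) (i : Fin P) : NTVert P N := Sum.inl (Sum.inl i)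
/-- Vertex `b_j`. -/
def vb (P N : ℕ) (j : Fin N) : NTVert P N := Sum.inl (Sum.inr j)
/-- Vertex `c_k`. -/
def vc (P N : ℕ) (k : Fin N) : NTVert P N := Sum.inr (Sum.inl k)
/-- Vertex `ā_i`. -/
def vabar (P N : ℕ) (i : Fin P) : NTVert P N := Sum.inr (Sum.inr i)

/-- Adjacency (as a `Bool`) of the negative-triangle gadget graph. -/
def ntAdjB (P N : ℕ) : NTVert P N → NTVert P N → Bool
  | Sum.inl (Sum.inl i), Sum.inl (Sum.inl i') => i.val + 1 == i'.val || i'.val + 1 == i.val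
  | Sum.inl (Sum.inl _), Sum.inl (Sum.inr _) => true
  | Sum.inl (Sum.inr _), Sum.inl (Sum.inl _) => true
  | Sum.inl (Sum.inr _), Sum.inr (Sum.inl _) => true
  | Sum.inr (Sum.inl _), Sum.inl (Sum.inr _) => true
  | Sum.inr (Sum.inl _), Sum.inr (Sum.inr _) => true
  | Sum.inr (Sum.inr _), Sum.inr (Sum.inl _) => true
  | Sum.inr (Sum.inr i), Sum.inr (Sum.inr i') => i.val + 1 == i'.val || i'.val + 1 == i.val
  | _, _ => false

/-- The negative-triangle gadget graph. -/
def ntGraph (P N : ℕ) : SimpleGraph (NTVert P N) where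
  Adj x y := ntAdjB P N x y = true
  symm := by
    constructor
    rintro ((i | j) | (k | i)) ((i' | j') | (k' | i')) h <;>
      simp_all [ntAdjB] <;> omega
  loopless := by
    constructor
    rintro ((i | j) | (k | i)) h <;> simp_all [ntAdjB]

/-- The edge weights of the negative-triangle gadget graph. -/
def ntW (P N : ℕ) (W : ℤ) (wAB : Fin P → Fin N → ℤ) (wBC : Fin N → Fin N → ℤ)
    (wCA : Fin N → Fin P → ℤ) : NTVert P N → NTVert P N → ℤ
  | Sum.inl (Sum.inl i), Sum.inl (Sum.inr j) => wAB i j + 3 * ((P : ℤ) - (i : ℕ)) * W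
  | Sum.inl (Sum.inr j), Sum.inl (Sum.inl i) => wAB i j + 3 * ((P : ℤ) - (i : ℕ)) * W
  | Sum.inl (Sum.inr j), Sum.inr (Sum.inl k) => wBC j k + 3 * W
  | Sum.inr (Sum.inl k), Sum.inl (Sum.inr j) => wBC j k + 3 * W
  | Sum.inr (Sum.inl k), Sum.inr (Sum.inr i) => wCA k i + 3 * (((i : ℕ) : ℤ) + 1) * W
  | Sum.inr (Sum.inr i), Sum.inr (Sum.inl k) => wCA k i + 3 * (((i : ℕ) : ℤ) + 1) * W
  | _, _ => 0

/-- The total weight of a walk: the sum of the weights of its edges, with multiplicity. -/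
def walkWeight {V : Type*} {G : SimpleGraph V} (w : V → V → ℤ) {s t : V}
    (p : G.Walk s t) : ℤ :=
  (p.darts.map fun d => w d.toProd.1 d.toProd.2).sum

lemma walkWeight_cons {V : Type*} {G : SimpleGraph V} (w : V → V → ℤ) {x y t : V}
    (h : G.Adj x y) (p : G.Walk y t) :
    walkWeight w (SimpleGraph.Walk.cons h p) = w x y + walkWeight w p := by
  simp [walkWeight]

section aux
variable (P N : ℕ) (W : ℤ) (hW : 1 ≤ W)
  (wAB : Fin P → Fin N → ℤ) (wBC : Fin N → Fin N → ℤ) (wCA : Fin N → Fin P → ℤ)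
  (hAB : ∀ i j, -W ≤ wAB i j ∧ wAB i j ≤ W)
  (hBC : ∀ j k, -W ≤ wBC j k ∧ wBC j k ≤ W)
  (hCA : ∀ k i, -W ≤ wCA k i ∧ wCA k i ≤ W)

include hW hAB hBC hCA in
lemma ntW_nonneg : ∀ x y : NTVert P N, 0 ≤ ntW P N W wAB wBC wCA x y := by
  rintro ((i | j) | (k | i)) ((i' | j') | (k' | i')) <;> simp [ntW]
  · have := (hAB i j').1; have : (i.val : ℤ) + 1 ≤ (P : ℤ) := by exact_mod_cast i.isLt
    nlinarith [hW, (hAB i j').1]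
  · have : (i'.val : ℤ) + 1 ≤ (P : ℤ) := by exact_mod_cast i'.isLt
    nlinarith [hW, (hAB i' j).1]
  · nlinarith [hW, (hBC j k').1]
  · nlinarith [hW, (hBC j' k).1]
  · nlinarith [hW, (hCA k i').1, Int.ofNat_nonneg i'.val]
  · nlinarith [hW, (hCA k' i).1, Int.ofNat_nonneg i.val]

include hW hAB hBC hCA in
lemma ntW_bc : ∀ (x : NTVert P N) (k : Fin N), (ntGraph P N).Adj x (vc P N k) →
    2 * W ≤ ntW P N W wAB wBC wCA x (vc P N k) := by
  rintro ((i | j) | (k' | i)) k h <;> simp [ntGraph, ntAdjB, vc] at h <;> simp [ntW, vc]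
  · nlinarith [hW, (hBC j k).1]
  · nlinarith [hW, (hCA k i).1, Int.ofNat_nonneg i.val]

include hW hAB hBC hCA in
lemma walk_to_c (k : Fin N) : ∀ (x t : NTVert P N) (q : (ntGraph P N).Walk x t),
    t = vc P N k → 1 ≤ q.length → 2 * W ≤ walkWeight (ntW P N W wAB wBC wCA) q := by
  intro x t q
  induction q with
  | nil => simp
  | cons h p ih =>
    intro ht _
    subst ht
    rw [walkWeight_cons]
    rcases Nat.eq_zero_or_pos p.length with h0 | h1
    · obtain rfl := (SimpleGraph.Walk.eq_of_length_eq_zero h0)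
      have := ntW_bc P N W hW wAB wBC wCA hAB hBC hCA _ k h
      have hp : walkWeight (ntW P N W wAB wBC wCA) p = 0 := by
        cases p with
        | nil => simp [walkWeight]
        | cons h' p' => simp at h0
      linarith
    · exact le_add_of_nonneg_of_le
        (ntW_nonneg P N W hW wAB wBC wCA hAB hBC hCA _ _) (ih rfl h1)

end aux

/-- In the negative-triangle gadget graph: every edge incident to a vertex
of `B ∪ C` has weight at least `2W`; every edge `{b_j, c_k}` has weight at most `4W`;
and consequently every walk from `b_j` to `c_k` with at least two edges has total weight
at least `4W`, hence at least the weight of the edge `{b_j, c_k}`. -/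
theorem stmt2 (P N : ℕ) (hP : 1 ≤ P) (hN : 1 ≤ N) (W : ℤ) (hW : 1 ≤ W)
    (wAB : Fin P → Fin N → ℤ) (wBC : Fin N → Fin N → ℤ) (wCA : Fin N → Fin P → ℤ)
    (hAB : ∀ i j, -W ≤ wAB i j ∧ wAB i j ≤ W)
    (hBC : ∀ j k, -W ≤ wBC j k ∧ wBC j k ≤ W)
    (hCA : ∀ k i, -W ≤ wCA k i ∧ wCA k i ≤ W) :
    (∀ x y : NTVert P N, (ntGraph P N).Adj x y →
        ((∃ j, x = vb P N j) ∨ (∃ k, x = vc P N k)) →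
        2 * W ≤ ntW P N W wAB wBC wCA x y) ∧
    (∀ (j k : Fin N), ntW P N W wAB wBC wCA (vb P N j) (vc P N k) ≤ 4 * W) ∧
    (∀ (j k : Fin N) (p : (ntGraph P N).Walk (vb P N j) (vc P N k)), 2 ≤ p.length →
        4 * W ≤ walkWeight (ntW P N W wAB wBC wCA) p ∧
        ntW P N W wAB wBC wCA (vb P N j) (vc P N k) ≤
          walkWeight (ntW P N W wAB wBC wCA) p) := by
  constructor
  · rintro x y hadj (⟨j, rfl⟩ | ⟨k, rfl⟩)
    · rcases y with ((i | j') | (k | i)) <;> simp [ntGraph, ntAdjB, vb] at hadj <;> simp [ntW, vb]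
      · have : (i.val : ℤ) + 1 ≤ (P : ℤ) := by exact_mod_cast i.isLt
        nlinarith [hW, (hAB i j).1]
      · nlinarith [hW, (hBC j k).1]
    · rcases y with ((i | j) | (k' | i)) <;> simp [ntGraph, ntAdjB, vc] at hadj <;> simp [ntW, vc]
      · nlinarith [hW, (hBC j k).1]
      · nlinarith [hW, (hCA k i).1, Int.ofNat_nonneg i.val]
  constructor
  · intro j k
    simp only [ntW, vb, vc]
    nlinarith [hW, (hBC j k).2]
  · intro j k p hlen
    have key : 4 * W ≤ walkWeight (ntW P N W wAB wBC wCA) p := by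
      cases p with
      | cons h q =>
        rename_i y
        rw [walkWeight_cons]
        have h1 : 2 * W ≤ ntW P N W wAB wBC wCA (vb P N j) y := by
          clear hlen
          revert h
          rcases y with ((i | j') | (k' | i)) <;> intro h' <;>
            simp [ntGraph, ntAdjB, vb] at h' <;> simp [ntW, vb]
          · have : (i.val : ℤ) + 1 ≤ (P : ℤ) := by exact_mod_cast i.isLt
            nlinarith [hW, (hAB i j).1]
          · nlinarith [hW, (hBC j k').1]
        have h2 : 2 * W ≤ walkWeight (ntW P N W wAB wBC wCA) q := by
          apply walk_to_c P N W hW wAB wBC wCA hAB hBC hCA k _ _ q rfl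
          simpa using Nat.le_of_succ_le_succ hlen
        linarith
    refine ⟨key, ?_⟩
    have : ntW P N W wAB wBC wCA (vb P N j) (vc P N k) ≤ 4 * W := by
      simp only [ntW, vb, vc]; nlinarith [hW, (hBC j k).2]
    linarith
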